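/- For every natural number n ≥ 7, λ₁(A_U) < n − 2. -/

import Mathlib

open Matrix

/-- The largest eigenvalue of a real matrix (for symmetric matrices this is λ₁). -/
noncomputable def lam1 {n : ℕ} (A : Matrix (Fin n) (Fin n) ℝ) : ℝ :=
  sSup {μ : ℝ | ∃ v : Fin n → ℝ, v ≠ 0 ∧ A.mulVec v = μ • v}

/-- `A` is the adjacency matrix of a signed graph: symmetric, zero diagonal,
entries in {-1,0,1}. -/
def IsSignedAdj {n : ℕ} (A : Matrix (Fin n) (Fin n) ℝ) : Prop :=
  A.IsSymm ∧ (∀ i, A i i = 0) ∧ ∀ i j, A i j = -1 ∨ A i j = 0 ∨ A i j = 1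

/-- A signed graph is balanced if a global sign switching makes all edges positive. -/
def IsBalanced {n : ℕ} (A : Matrix (Fin n) (Fin n) ℝ) : Prop :=
  ∃ s : Fin n → ℝ, (∀ i, s i = -1 ∨ s i = 1) ∧ ∀ i j, 0 ≤ s i * A i j * s j

/-- Every fully present copy of K_{3,3} is balanced. -/
def K33Free {n : ℕ} (A : Matrix (Fin n) (Fin n) ℝ) : Prop :=
  ∀ a₁ a₂ a₃ b₁ b₂ b₃ : Fin n,
    [a₁, a₂, a₃, b₁, b₂, b₃].Nodup →
    (∀ a ∈ [a₁, a₂, a₃], ∀ b ∈ [b₁, b₂, b₃], A a b ≠ 0) →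
    ∀ a ∈ [a₁, a₂, a₃], ∀ a' ∈ [a₁, a₂, a₃], ∀ b ∈ [b₁, b₂, b₃], ∀ b' ∈ [b₁, b₂, b₃],
      A a b * A a b' * A a' b * A a' b' = 1

/-- Switching isomorphism of signed adjacency matrices. -/
def SwitchIso {n : ℕ} (A B : Matrix (Fin n) (Fin n) ℝ) : Prop :=
  ∃ σ : Equiv.Perm (Fin n), ∃ s : Fin n → ℝ, (∀ i, s i = -1 ∨ s i = 1) ∧
    ∀ i j, B i j = s i * s j * A (σ i) (σ j)

/-- Adjacency matrix of Γ_{n,t}: vertex 0 is u, vertices 1,…,n-1 form an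
all-positive K_{n-1}; u is adjacent to 1,…,t-1, with u1 the unique negative edge. -/
noncomputable def Mnt (n t : ℕ) : Matrix (Fin n) (Fin n) ℝ :=
  Matrix.of fun i j =>
    if i = j then 0
    else if (i : ℕ) = 0 then (if (j : ℕ) = 1 then -1 else if (j : ℕ) < t then 1 else 0)
    else if (j : ℕ) = 0 then (if (i : ℕ) = 1 then -1 else if (i : ℕ) < t then 1 else 0)
    else 1

/-- Adjacency matrix of the signed graph U (vertices v₁,…,vₙ are indices 0,…,n-1):
v₁v₂ negative; v₁,v₂ each positively joined to v₃,v₄,v₅; v₃,…,vₙ an all-positive K_{n-2}. -/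
noncomputable def AU (n : ℕ) : Matrix (Fin n) (Fin n) ℝ :=
  Matrix.of fun i j =>
    if i = j then 0
    else if ((i : ℕ) = 0 ∧ (j : ℕ) = 1) ∨ ((i : ℕ) = 1 ∧ (j : ℕ) = 0) then -1
    else if 2 ≤ (i : ℕ) ∧ 2 ≤ (j : ℕ) then 1
    else if ((i : ℕ) ≤ 1 ∧ 2 ≤ (j : ℕ) ∧ (j : ℕ) ≤ 4) ∨
            ((j : ℕ) ≤ 1 ∧ 2 ≤ (i : ℕ) ∧ (i : ℕ) ≤ 4) then 1
    else 0

/-- Adjacency matrix of Z₁: v₁v₂ negative; v₁ positive to v₃,v₄,v₅; v₂ positive to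
v₃,v₄,v₆; v₃,…,vₙ an all-positive K_{n-2} minus the edge v₅v₆. -/
noncomputable def AZ1 (n : ℕ) : Matrix (Fin n) (Fin n) ℝ :=
  Matrix.of fun i j =>
    if i = j then 0
    else if ((i : ℕ) = 0 ∧ (j : ℕ) = 1) ∨ ((i : ℕ) = 1 ∧ (j : ℕ) = 0) then -1
    else if 2 ≤ (i : ℕ) ∧ 2 ≤ (j : ℕ) then
      (if ((i : ℕ) = 4 ∧ (j : ℕ) = 5) ∨ ((i : ℕ) = 5 ∧ (j : ℕ) = 4) then 0 else 1)
    else if ((i : ℕ) = 0 ∧ ((j : ℕ) = 2 ∨ (j : ℕ) = 3 ∨ (j : ℕ) = 4)) ∨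
            ((j : ℕ) = 0 ∧ ((i : ℕ) = 2 ∨ (i : ℕ) = 3 ∨ (i : ℕ) = 4)) ∨
            ((i : ℕ) = 1 ∧ ((j : ℕ) = 2 ∨ (j : ℕ) = 3 ∨ (j : ℕ) = 5)) ∨
            ((j : ℕ) = 1 ∧ ((i : ℕ) = 2 ∨ (i : ℕ) = 3 ∨ (i : ℕ) = 5)) then 1
    else 0

/-- Adjacency matrix of Z₂: v₁v₂ negative; v₁ positive to v₃,v₄,v₅; v₂ positive to
v₃,v₄,v₆; v₃,…,vₙ an all-positive K_{n-2} minus the edges v₄v₅ and v₄v₆. -/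
noncomputable def AZ2 (n : ℕ) : Matrix (Fin n) (Fin n) ℝ :=
  Matrix.of fun i j =>
    if i = j then 0
    else if ((i : ℕ) = 0 ∧ (j : ℕ) = 1) ∨ ((i : ℕ) = 1 ∧ (j : ℕ) = 0) then -1
    else if 2 ≤ (i : ℕ) ∧ 2 ≤ (j : ℕ) then
      (if ((i : ℕ) = 3 ∧ ((j : ℕ) = 4 ∨ (j : ℕ) = 5)) ∨
          ((j : ℕ) = 3 ∧ ((i : ℕ) = 4 ∨ (i : ℕ) = 5)) then 0 else 1)
    else if ((i : ℕ) = 0 ∧ ((j : ℕ) = 2 ∨ (j : ℕ) = 3 ∨ (j : ℕ) = 4)) ∨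
            ((j : ℕ) = 0 ∧ ((i : ℕ) = 2 ∨ (i : ℕ) = 3 ∨ (i : ℕ) = 4)) ∨
            ((i : ℕ) = 1 ∧ ((j : ℕ) = 2 ∨ (j : ℕ) = 3 ∨ (j : ℕ) = 5)) ∨
            ((j : ℕ) = 1 ∧ ((i : ℕ) = 2 ∨ (i : ℕ) = 3 ∨ (i : ℕ) = 5)) then 1
    else 0

/-- Adjacency matrix of W: v₁v₂ negative; v₁,v₃,v₅,v₆,…,vₙ an all-positive K_{n-2};
v₂ positive to v₃,v₄; v₄ positive to v₁,v₃,v₅. -/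
noncomputable def AW (n : ℕ) : Matrix (Fin n) (Fin n) ℝ :=
  Matrix.of fun i j =>
    if i = j then 0
    else if ((i : ℕ) = 0 ∧ (j : ℕ) = 1) ∨ ((i : ℕ) = 1 ∧ (j : ℕ) = 0) then -1
    else if (i : ℕ) ≠ 1 ∧ (i : ℕ) ≠ 3 ∧ (j : ℕ) ≠ 1 ∧ (j : ℕ) ≠ 3 then 1
    else if ((i : ℕ) = 1 ∧ ((j : ℕ) = 2 ∨ (j : ℕ) = 3)) ∨
            ((j : ℕ) = 1 ∧ ((i : ℕ) = 2 ∨ (i : ℕ) = 3)) ∨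
            ((i : ℕ) = 3 ∧ ((j : ℕ) = 0 ∨ (j : ℕ) = 2 ∨ (j : ℕ) = 4)) ∨
            ((j : ℕ) = 3 ∧ ((i : ℕ) = 0 ∨ (i : ℕ) = 2 ∨ (i : ℕ) = 4)) then 1
    else 0

def cI {n : ℕ} (i : Fin n) : ℝ := if 2 ≤ (i:ℕ) then 1 else 0
def dI {n : ℕ} (i : Fin n) : ℝ := if 2 ≤ (i:ℕ) ∧ (i:ℕ) ≤ 4 then 1 else 0
def eI {n : ℕ} (i : Fin n) : ℝ := if (i:ℕ) ≤ 1 then 1 else 0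
def z0 {n : ℕ} (i : Fin n) : ℝ := if (i:ℕ) = 0 then 1 else 0
def z1 {n : ℕ} (i : Fin n) : ℝ := if (i:ℕ) = 1 then 1 else 0

lemma AU_entry_nat (a b : ℕ) (hab : a ≠ b) :
    (if (a = 0 ∧ b = 1) ∨ (a = 1 ∧ b = 0) then (-1:ℝ)
     else if 2 ≤ a ∧ 2 ≤ b then 1
     else if (a ≤ 1 ∧ 2 ≤ b ∧ b ≤ 4) ∨ (b ≤ 1 ∧ 2 ≤ a ∧ a ≤ 4) then 1 else 0)
    = (if 2 ≤ a then (1:ℝ) else 0) * (if 2 ≤ b then 1 else 0)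
      + (if a ≤ 1 then (1:ℝ) else 0) * (if 2 ≤ b ∧ b ≤ 4 then 1 else 0)
      + (if 2 ≤ a ∧ a ≤ 4 then (1:ℝ) else 0) * (if b ≤ 1 then 1 else 0)
      - ((if a = 0 then (1:ℝ) else 0) * (if b = 1 then 1 else 0)
         + (if a = 1 then (1:ℝ) else 0) * (if b = 0 then 1 else 0)) := by
  obtain ha | ha | ha | ha : a = 0 ∨ a = 1 ∨ (2 ≤ a ∧ a ≤ 4) ∨ 5 ≤ a := by omega
  all_goals obtain hb | hb | hb | hb : b = 0 ∨ b = 1 ∨ (2 ≤ b ∧ b ≤ 4) ∨ 5 ≤ b := by omega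
  · exact absurd (by omega) hab
  · rw [if_pos (show (a = 0 ∧ b = 1) ∨ (a = 1 ∧ b = 0) by omega), if_neg (show ¬(2 ≤ a) by omega), if_neg (show ¬(2 ≤ b) by omega), if_pos (show a ≤ 1 by omega), if_neg (show ¬(2 ≤ b ∧ b ≤ 4) by omega), if_neg (show ¬(2 ≤ a ∧ a ≤ 4) by omega), if_pos (show b ≤ 1 by omega), if_pos (show a = 0 by omega), if_pos (show b = 1 by omega), if_neg (show ¬(a = 1) by omega), if_neg (show ¬(b = 0) by omega)]; norm_num
  · rw [if_neg (show ¬((a = 0 ∧ b = 1) ∨ (a = 1 ∧ b = 0)) by omega), if_neg (show ¬(2 ≤ a ∧ 2 ≤ b) by omega), if_pos (show (a ≤ 1 ∧ 2 ≤ b ∧ b ≤ 4) ∨ (b ≤ 1 ∧ 2 ≤ a ∧ a ≤ 4) by omega), if_neg (show ¬(2 ≤ a) by omega), if_pos (show 2 ≤ b by omega), if_pos (show a ≤ 1 by omega), if_pos (show 2 ≤ b ∧ b ≤ 4 by omega), if_neg (show ¬(2 ≤ a ∧ a ≤ 4) by omega), if_neg (show ¬(b ≤ 1) by omega), if_pos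 (show a = 0 by omega), if_neg (show ¬(b = 1) by omega), if_neg (show ¬(a = 1) by omega), if_neg (show ¬(b = 0) by omega)]; norm_num
  · rw [if_neg (show ¬((a = 0 ∧ b = 1) ∨ (a = 1 ∧ b = 0)) by omega), if_neg (show ¬(2 ≤ a ∧ 2 ≤ b) by omega), if_neg (show ¬((a ≤ 1 ∧ 2 ≤ b ∧ b ≤ 4) ∨ (b ≤ 1 ∧ 2 ≤ a ∧ a ≤ 4)) by omega), if_neg (show ¬(2 ≤ a) by omega), if_pos (show 2 ≤ b by omega), if_pos (show a ≤ 1 by omega), if_neg (show ¬(2 ≤ b ∧ b ≤ 4) by omega), if_neg (show ¬(2 ≤ a ∧ a ≤ 4) by omega), if_neg (show ¬(b ≤ 1) by omega), if_pos (show a = 0 by omega), if_neg (show ¬(b = 1) by omega), if_neg (show ¬(a = 1) by omega), if_neg (show ¬(b = 0) by omega)]; norm_num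
  · rw [if_pos (show (a = 0 ∧ b = 1) ∨ (a = 1 ∧ b = 0) by omega), if_neg (show ¬(2 ≤ a) by omega), if_neg (show ¬(2 ≤ b) by omega), if_pos (show a ≤ 1 by omega), if_neg (show ¬(2 ≤ b ∧ b ≤ 4) by omega), if_neg (show ¬(2 ≤ a ∧ a ≤ 4) by omega), if_pos (show b ≤ 1 by omega), if_neg (show ¬(a = 0) by omega), if_neg (show ¬(b = 1) by omega), if_pos (show a = 1 by omega), if_pos (show b = 0 by omega)]; norm_num
  · exact absurd (by omega) hab
  · rw [if_neg (show ¬((a = 0 ∧ b = 1) ∨ (a = 1 ∧ b = 0)) by omega), if_neg (show ¬(2 ≤ a ∧ 2 ≤ b) by omega), if_pos (show (a ≤ 1 ∧ 2 ≤ b ∧ b ≤ 4) ∨ (b ≤ 1 ∧ 2 ≤ a ∧ a ≤ 4) by omega), if_neg (show ¬(2 ≤ a) by omega), if_pos (show 2 ≤ b by omega), if_pos (show a ≤ 1 by omega), if_pos (show 2 ≤ b ∧ b ≤ 4 by omega), if_neg (show ¬(2 ≤ a ∧ a ≤ 4) by omega), if_neg (show ¬(b ≤ 1) by omega), if_neg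 (show ¬(a = 0) by omega), if_neg (show ¬(b = 1) by omega), if_pos (show a = 1 by omega), if_neg (show ¬(b = 0) by omega)]; norm_num
  · rw [if_neg (show ¬((a = 0 ∧ b = 1) ∨ (a = 1 ∧ b = 0)) by omega), if_neg (show ¬(2 ≤ a ∧ 2 ≤ b) by omega), if_neg (show ¬((a ≤ 1 ∧ 2 ≤ b ∧ b ≤ 4) ∨ (b ≤ 1 ∧ 2 ≤ a ∧ a ≤ 4)) by omega), if_neg (show ¬(2 ≤ a) by omega), if_pos (show 2 ≤ b by omega), if_pos (show a ≤ 1 by omega), if_neg (show ¬(2 ≤ b ∧ b ≤ 4) by omega), if_neg (show ¬(2 ≤ a ∧ a ≤ 4) by omega), if_neg (show ¬(b ≤ 1) by omega), if_neg (show ¬(a = 0) by omega), if_neg (show ¬(b = 1) by omega), if_pos (show a = 1 by omega), if_neg (show ¬(b = 0) by omega)]; norm_num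
  · rw [if_neg (show ¬((a = 0 ∧ b = 1) ∨ (a = 1 ∧ b = 0)) by omega), if_neg (show ¬(2 ≤ a ∧ 2 ≤ b) by omega), if_pos (show (a ≤ 1 ∧ 2 ≤ b ∧ b ≤ 4) ∨ (b ≤ 1 ∧ 2 ≤ a ∧ a ≤ 4) by omega), if_pos (show 2 ≤ a by omega), if_neg (show ¬(2 ≤ b) by omega), if_neg (show ¬(a ≤ 1) by omega), if_neg (show ¬(2 ≤ b ∧ b ≤ 4) by omega), if_pos (show 2 ≤ a ∧ a ≤ 4 by omega), if_pos (show b ≤ 1 by omega), if_neg (show ¬(a = 0) by omega), if_neg (show ¬(b = 1) by omega), if_neg (show ¬(a = 1) by omega), if_pos (show b = 0 by omega)]; norm_num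
  · rw [if_neg (show ¬((a = 0 ∧ b = 1) ∨ (a = 1 ∧ b = 0)) by omega), if_neg (show ¬(2 ≤ a ∧ 2 ≤ b) by omega), if_pos (show (a ≤ 1 ∧ 2 ≤ b ∧ b ≤ 4) ∨ (b ≤ 1 ∧ 2 ≤ a ∧ a ≤ 4) by omega), if_pos (show 2 ≤ a by omega), if_neg (show ¬(2 ≤ b) by omega), if_neg (show ¬(a ≤ 1) by omega), if_neg (show ¬(2 ≤ b ∧ b ≤ 4) by omega), if_pos (show 2 ≤ a ∧ a ≤ 4 by omega), if_pos (show b ≤ 1 by omega), if_neg (show ¬(a = 0) by omega), if_pos (show b = 1 by omega), if_neg (show ¬(a = 1) by omega), if_neg (show ¬(b = 0) by omega)]; norm_num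
  · rw [if_neg (show ¬((a = 0 ∧ b = 1) ∨ (a = 1 ∧ b = 0)) by omega), if_pos (show 2 ≤ a ∧ 2 ≤ b by omega), if_pos (show 2 ≤ a by omega), if_pos (show 2 ≤ b by omega), if_neg (show ¬(a ≤ 1) by omega), if_pos (show 2 ≤ b ∧ b ≤ 4 by omega), if_pos (show 2 ≤ a ∧ a ≤ 4 by omega), if_neg (show ¬(b ≤ 1) by omega), if_neg (show ¬(a = 0) by omega), if_neg (show ¬(b = 1) by omega), if_neg (show ¬(a = 1) by omega), if_neg (show ¬(b = 0) by omega)]; norm_num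
  · rw [if_neg (show ¬((a = 0 ∧ b = 1) ∨ (a = 1 ∧ b = 0)) by omega), if_pos (show 2 ≤ a ∧ 2 ≤ b by omega), if_pos (show 2 ≤ a by omega), if_pos (show 2 ≤ b by omega), if_neg (show ¬(a ≤ 1) by omega), if_neg (show ¬(2 ≤ b ∧ b ≤ 4) by omega), if_pos (show 2 ≤ a ∧ a ≤ 4 by omega), if_neg (show ¬(b ≤ 1) by omega), if_neg (show ¬(a = 0) by omega), if_neg (show ¬(b = 1) by omega), if_neg (show ¬(a = 1) by omega), if_neg (show ¬(b = 0) by omega)]; norm_num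
  · rw [if_neg (show ¬((a = 0 ∧ b = 1) ∨ (a = 1 ∧ b = 0)) by omega), if_neg (show ¬(2 ≤ a ∧ 2 ≤ b) by omega), if_neg (show ¬((a ≤ 1 ∧ 2 ≤ b ∧ b ≤ 4) ∨ (b ≤ 1 ∧ 2 ≤ a ∧ a ≤ 4)) by omega), if_pos (show 2 ≤ a by omega), if_neg (show ¬(2 ≤ b) by omega), if_neg (show ¬(a ≤ 1) by omega), if_neg (show ¬(2 ≤ b ∧ b ≤ 4) by omega), if_neg (show ¬(2 ≤ a ∧ a ≤ 4) by omega), if_pos (show b ≤ 1 by omega), if_neg (show ¬(a = 0) by omega), if_neg (show ¬(b = 1) by omega), if_neg (show ¬(a = 1) by omega), if_pos (show b = 0 by omega)]; norm_num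
  · rw [if_neg (show ¬((a = 0 ∧ b = 1) ∨ (a = 1 ∧ b = 0)) by omega), if_neg (show ¬(2 ≤ a ∧ 2 ≤ b) by omega), if_neg (show ¬((a ≤ 1 ∧ 2 ≤ b ∧ b ≤ 4) ∨ (b ≤ 1 ∧ 2 ≤ a ∧ a ≤ 4)) by omega), if_pos (show 2 ≤ a by omega), if_neg (show ¬(2 ≤ b) by omega), if_neg (show ¬(a ≤ 1) by omega), if_neg (show ¬(2 ≤ b ∧ b ≤ 4) by omega), if_neg (show ¬(2 ≤ a ∧ a ≤ 4) by omega), if_pos (show b ≤ 1 by omega), if_neg (show ¬(a = 0) by omega), if_pos (show b = 1 by omega), if_neg (show ¬(a = 1) by omega), if_neg (show ¬(b = 0) by omega)]; norm_num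
  · rw [if_neg (show ¬((a = 0 ∧ b = 1) ∨ (a = 1 ∧ b = 0)) by omega), if_pos (show 2 ≤ a ∧ 2 ≤ b by omega), if_pos (show 2 ≤ a by omega), if_pos (show 2 ≤ b by omega), if_neg (show ¬(a ≤ 1) by omega), if_pos (show 2 ≤ b ∧ b ≤ 4 by omega), if_neg (show ¬(2 ≤ a ∧ a ≤ 4) by omega), if_neg (show ¬(b ≤ 1) by omega), if_neg (show ¬(a = 0) by omega), if_neg (show ¬(b = 1) by omega), if_neg (show ¬(a = 1) by omega), if_neg (show ¬(b = 0) by omega)]; norm_num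
  · rw [if_neg (show ¬((a = 0 ∧ b = 1) ∨ (a = 1 ∧ b = 0)) by omega), if_pos (show 2 ≤ a ∧ 2 ≤ b by omega), if_pos (show 2 ≤ a by omega), if_pos (show 2 ≤ b by omega), if_neg (show ¬(a ≤ 1) by omega), if_neg (show ¬(2 ≤ b ∧ b ≤ 4) by omega), if_neg (show ¬(2 ≤ a ∧ a ≤ 4) by omega), if_neg (show ¬(b ≤ 1) by omega), if_neg (show ¬(a = 0) by omega), if_neg (show ¬(b = 1) by omega), if_neg (show ¬(a = 1) by omega), if_neg (show ¬(b = 0) by omega)]; norm_num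

lemma AU_entry {n : ℕ} (i j : Fin n) :
    AU n i j = cI i * cI j - (if i = j then cI i else 0)
      + eI i * dI j + dI i * eI j - (z0 i * z1 j + z1 i * z0 j) := by
  by_cases hij : i = j
  · subst hij
    have h1 : AU n i i = 0 := by simp [AU]
    rw [h1, if_pos rfl]
    unfold cI dI eI z0 z1
    by_cases h2 : 2 ≤ (i:ℕ)
    · rw [if_pos h2, if_neg (show ¬(i:ℕ) ≤ 1 by omega), if_neg (show ¬(i:ℕ) = 0 by omega),
        if_neg (show ¬(i:ℕ) = 1 by omega)]
      by_cases h4 : (i:ℕ) ≤ 4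
      · rw [if_pos (⟨h2, h4⟩ : 2 ≤ (i:ℕ) ∧ (i:ℕ) ≤ 4)]; ring
      · rw [if_neg (show ¬(2 ≤ (i:ℕ) ∧ (i:ℕ) ≤ 4) by omega)]; ring
    · rw [if_neg h2, if_neg (show ¬(2 ≤ (i:ℕ) ∧ (i:ℕ) ≤ 4) by omega),
        if_pos (show (i:ℕ) ≤ 1 by omega)]
      by_cases h0 : (i:ℕ) = 0
      · rw [if_pos h0, if_neg (show ¬(i:ℕ) = 1 by omega)]; ring
      · rw [if_neg h0, if_pos (show (i:ℕ) = 1 by omega)]; ring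
  · have hab : (i:ℕ) ≠ (j:ℕ) := fun h => hij (Fin.ext h)
    simp only [AU, Matrix.of_apply, if_neg hij, if_neg (show ¬ i = j from hij),
      cI, dI, eI, z0, z1]
    rw [AU_entry_nat _ _ hab]
    ring

lemma quad_form {n : ℕ} (v : Fin n → ℝ) :
    v ⬝ᵥ (AU n).mulVec v =
      (∑ i, cI i * v i)^2 - (∑ i, cI i * v i^2)
      + 2 * (∑ i, eI i * v i) * (∑ i, dI i * v i)
      - 2 * (∑ i, z0 i * v i) * (∑ i, z1 i * v i) := by
  have h : ∀ i j : Fin n, v i * (AU n i j * v j)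
      = (cI i * v i) * (cI j * v j) - (if i = j then cI i * (v i * v j) else 0)
        + (eI i * v i) * (dI j * v j) + (dI i * v i) * (eI j * v j)
        - (z0 i * v i) * (z1 j * v j) - (z1 i * v i) * (z0 j * v j) := by
    intro i j
    rw [AU_entry]
    split_ifs with hij <;> ring
  calc v ⬝ᵥ (AU n).mulVec v = ∑ i, ∑ j, v i * (AU n i j * v j) := by
        simp [dotProduct, mulVec, Finset.mul_sum]
    _ = ∑ i, ∑ j, ((cI i * v i) * (cI j * v j) - (if i = j then cI i * (v i * v j) else 0)
        + (eI i * v i) * (dI j * v j) + (dI i * v i) * (eI j * v j)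
        - (z0 i * v i) * (z1 j * v j) - (z1 i * v i) * (z0 j * v j)) := by
        simp only [h]
    _ = (∑ i, cI i * v i)^2 - (∑ i, cI i * v i^2)
        + 2 * (∑ i, eI i * v i) * (∑ i, dI i * v i)
        - 2 * (∑ i, z0 i * v i) * (∑ i, z1 i * v i) := by
        simp only [Finset.sum_sub_distrib, Finset.sum_add_distrib, Finset.sum_ite_eq,
          Finset.mem_univ, if_true, ← Finset.sum_mul, ← Finset.mul_sum]
        have hsq : ∀ x : Fin n, cI x * (v x * v x) = cI x * v x ^ 2 := fun x => by ring
        simp only [hsq]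
        ring
def rI {n : ℕ} (i : Fin n) : ℝ := if 5 ≤ (i:ℕ) then 1 else 0

lemma sum_ind_eq {n : ℕ} (c : Fin n) (g : Fin n → ℝ) :
    ∑ i : Fin n, (if (i:ℕ) = (c:ℕ) then (1:ℝ) else 0) * g i = g c := by
  have h : ∀ i : Fin n, (if (i:ℕ) = (c:ℕ) then (1:ℝ) else 0) * g i
      = if i = c then g i else 0 := by
    intro i
    by_cases hic : i = c
    · subst hic; simp
    · rw [if_neg (fun hh => hic (Fin.ext hh)), if_neg hic, zero_mul]
  simp only [h]
  simp [Finset.sum_ite_eq' Finset.univ c g]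

lemma sum_ind_eq' {n : ℕ} (k : ℕ) (hk : k < n) (g : Fin n → ℝ) :
    ∑ i : Fin n, (if (i:ℕ) = k then (1:ℝ) else 0) * g i = g ⟨k, hk⟩ :=
  sum_ind_eq ⟨k, hk⟩ g

lemma sum_ind_one {n : ℕ} (k : ℕ) (hk : k < n) :
    ∑ i : Fin n, (if (i:ℕ) = k then (1:ℝ) else 0) = 1 := by
  have h := sum_ind_eq' k hk (fun _ => (1:ℝ))
  simpa using h

lemma sum_z0 {n : ℕ} (hn : 7 ≤ n) (g : Fin n → ℝ) :
    ∑ i, z0 i * g i = g ⟨0, by omega⟩ := by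
  simpa [z0] using sum_ind_eq' 0 (by omega) g

lemma sum_z1 {n : ℕ} (hn : 7 ≤ n) (g : Fin n → ℝ) :
    ∑ i, z1 i * g i = g ⟨1, by omega⟩ := by
  simpa [z1] using sum_ind_eq' 1 (by omega) g

lemma sum_eI {n : ℕ} (hn : 7 ≤ n) (g : Fin n → ℝ) :
    ∑ i, eI i * g i = g ⟨0, by omega⟩ + g ⟨1, by omega⟩ := by
  have h : ∀ i : Fin n, eI i * g i = z0 i * g i + z1 i * g i := by
    intro i
    unfold eI z0 z1
    by_cases h0 : (i:ℕ) = 0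
    · rw [if_pos (by omega), if_pos h0, if_neg (by omega)]; ring
    · by_cases h1 : (i:ℕ) = 1
      · rw [if_pos (by omega), if_neg h0, if_pos h1]; ring
      · rw [if_neg (by omega), if_neg h0, if_neg h1]; ring
  simp only [h, Finset.sum_add_distrib, sum_z0 hn, sum_z1 hn]

lemma sum_dI {n : ℕ} (hn : 7 ≤ n) (g : Fin n → ℝ) :
    ∑ i, dI i * g i = g ⟨2, by omega⟩ + g ⟨3, by omega⟩ + g ⟨4, by omega⟩ := by
  have h : ∀ i : Fin n, dI i * g i
      = (if (i:ℕ) = 2 then (1:ℝ) else 0) * g i + (if (i:ℕ) = 3 then (1:ℝ) else 0) * g i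
        + (if (i:ℕ) = 4 then (1:ℝ) else 0) * g i := by
    intro i
    unfold dI
    by_cases h2 : (i:ℕ) = 2
    · rw [if_pos (by omega), if_pos h2, if_neg (by omega), if_neg (by omega)]; ring
    · by_cases h3 : (i:ℕ) = 3
      · rw [if_pos (by omega), if_neg h2, if_pos h3, if_neg (by omega)]; ring
      · by_cases h4 : (i:ℕ) = 4
        · rw [if_pos (by omega), if_neg h2, if_neg h3, if_pos h4]; ring
        · rw [if_neg (by omega), if_neg h2, if_neg h3, if_neg h4]; ring
  simp only [h, Finset.sum_add_distrib]
  rw [sum_ind_eq' 2 (by omega) g, sum_ind_eq' 3 (by omega) g, sum_ind_eq' 4 (by omega) g]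

lemma cI_split {n : ℕ} (i : Fin n) (t : ℝ) : cI i * t = dI i * t + rI i * t := by
  unfold cI dI rI
  by_cases h2 : 2 ≤ (i:ℕ)
  · by_cases h4 : (i:ℕ) ≤ 4
    · rw [if_pos h2, if_pos ⟨h2, h4⟩, if_neg (by omega)]; ring
    · rw [if_pos h2, if_neg (by omega), if_pos (by omega)]; ring
  · rw [if_neg h2, if_neg (by omega), if_neg (by omega)]; ring

lemma one_split {n : ℕ} (i : Fin n) (t : ℝ) : t = z0 i * t + z1 i * t + cI i * t := by
  unfold z0 z1 cI
  by_cases h0 : (i:ℕ) = 0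
  · rw [if_pos h0, if_neg (by omega), if_neg (by omega)]; ring
  · by_cases h1 : (i:ℕ) = 1
    · rw [if_neg h0, if_pos h1, if_neg (by omega)]; ring
    · rw [if_neg h0, if_neg h1, if_pos (by omega)]; ring

lemma sum_cI {n : ℕ} (hn : 7 ≤ n) : ∑ i : Fin n, cI i = (n:ℝ) - 2 := by
  have h : ∀ i : Fin n, cI i
      = 1 - (if (i:ℕ) = 0 then (1:ℝ) else 0) - (if (i:ℕ) = 1 then (1:ℝ) else 0) := by
    intro i
    unfold cI
    by_cases h0 : (i:ℕ) = 0
    · rw [if_neg (by omega), if_pos h0, if_neg (by omega)]; ring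
    · by_cases h1 : (i:ℕ) = 1
      · rw [if_neg (by omega), if_neg h0, if_pos h1]; ring
      · rw [if_pos (by omega), if_neg h0, if_neg h1]; ring
  rw [Finset.sum_congr rfl fun i _ => h i, Finset.sum_sub_distrib, Finset.sum_sub_distrib,
    sum_ind_one 0 (by omega), sum_ind_one 1 (by omega), Finset.sum_const,
    Finset.card_univ, Fintype.card_fin, nsmul_eq_mul, mul_one]
  ring
set_option maxHeartbeats 1600000 in
lemma key_ineq {n : ℕ} (hn : 7 ≤ n) (v : Fin n → ℝ) (hv : v ≠ 0) :
    v ⬝ᵥ (AU n).mulVec v < ((n:ℝ) - 2) * (v ⬝ᵥ v) := by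
  have hn7 : (7:ℝ) ≤ (n:ℝ) := by exact_mod_cast hn
  set X := v ⟨0, by omega⟩ with hX
  set Y := v ⟨1, by omega⟩ with hY
  set Z2 := v ⟨2, by omega⟩ with hZ2
  set Z3 := v ⟨3, by omega⟩ with hZ3
  set Z4 := v ⟨4, by omega⟩ with hZ4
  set S := ∑ i : Fin n, cI i * v i with hS
  set Q := ∑ i : Fin n, cI i * v i ^ 2 with hQ
  set R := ∑ i : Fin n, rI i * v i ^ 2 with hR
  set U := ∑ i : Fin n, rI i * v i with hU
  -- decomposition facts
  have hQd : Q = Z2 ^ 2 + Z3 ^ 2 + Z4 ^ 2 + R := by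
    rw [hQ, Finset.sum_congr rfl fun i _ => cI_split i (v i ^ 2), Finset.sum_add_distrib,
      sum_dI hn (fun i => v i ^ 2)]
  have hSd : S = Z2 + Z3 + Z4 + U := by
    rw [hS, Finset.sum_congr rfl fun i _ => cI_split i (v i), Finset.sum_add_distrib,
      sum_dI hn v]
  have hvv : v ⬝ᵥ v = X ^ 2 + Y ^ 2 + Q := by
    have h : ∀ i : Fin n, v i * v i = z0 i * v i ^ 2 + z1 i * v i ^ 2 + cI i * v i ^ 2 := by
      intro i
      have h2 := one_split i (v i ^ 2)
      calc v i * v i = v i ^ 2 := by ring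
        _ = _ := h2
    rw [dotProduct, Finset.sum_congr rfl fun i _ => h i, Finset.sum_add_distrib,
      Finset.sum_add_distrib, sum_z0 hn (fun i => v i ^ 2), sum_z1 hn (fun i => v i ^ 2)]
    try ring
  -- Cauchy-Schwarz : S^2 ≤ (n-2) * Q
  have hCS : S ^ 2 ≤ ((n:ℝ) - 2) * Q := by
    have h := Finset.sum_mul_sq_le_sq_mul_sq Finset.univ (fun i : Fin n => cI i)
      (fun i => cI i * v i)
    have hidem : ∀ i : Fin n, cI i * (cI i * v i) = cI i * v i := by
      intro i; unfold cI; split_ifs <;> ring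
    have hsq1 : ∀ i : Fin n, cI i ^ 2 = cI i := by
      intro i; unfold cI; split_ifs <;> ring
    have hsq2 : ∀ i : Fin n, (cI i * v i) ^ 2 = cI i * v i ^ 2 := by
      intro i; unfold cI; split_ifs <;> ring
    simp only [hidem, hsq1, hsq2] at h
    rwa [sum_cI hn, ← hS, ← hQ] at h
  have hRnn : 0 ≤ R := Finset.sum_nonneg fun i _ => by
    unfold rI; split_ifs <;> [positivity; simp]
  -- rewrite the quadratic form
  rw [quad_form v, sum_eI hn v, sum_dI hn v, sum_z0 hn v, sum_z1 hn v, hvv,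
    ← hS, ← hQ, ← hX, ← hY, ← hZ2, ← hZ3, ← hZ4]
  by_contra hcon
  push_neg at hcon
  -- F ≤ 0 where F is the decomposed nonnegative expression
  have hid : 2 * (X - Y) ^ 2 + ((n:ℝ) - 7) * (X ^ 2 + Y ^ 2)
      + (Z2 - (X + Y)) ^ 2 + (Z3 - (X + Y)) ^ 2 + (Z4 - (X + Y)) ^ 2
      + R + (((n:ℝ) - 2) * Q - S ^ 2)
      = ((n:ℝ) - 2) * (X ^ 2 + Y ^ 2 + Q)
        - (S ^ 2 - Q + 2 * (X + Y) * (Z2 + Z3 + Z4) - 2 * X * Y) := by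
    rw [hQd]; ring
  have hF : 2 * (X - Y) ^ 2 + ((n:ℝ) - 7) * (X ^ 2 + Y ^ 2)
      + (Z2 - (X + Y)) ^ 2 + (Z3 - (X + Y)) ^ 2 + (Z4 - (X + Y)) ^ 2
      + R + (((n:ℝ) - 2) * Q - S ^ 2) ≤ 0 := by
    rw [hid]; linarith [hcon]
  have p1 : (0:ℝ) ≤ 2 * (X - Y) ^ 2 := by positivity
  have p2 : (0:ℝ) ≤ ((n:ℝ) - 7) * (X ^ 2 + Y ^ 2) := by
    apply mul_nonneg (by linarith) (by positivity)
  have p3 : (0:ℝ) ≤ (Z2 - (X + Y)) ^ 2 := sq_nonneg _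
  have p4 : (0:ℝ) ≤ (Z3 - (X + Y)) ^ 2 := sq_nonneg _
  have p5 : (0:ℝ) ≤ (Z4 - (X + Y)) ^ 2 := sq_nonneg _
  have p7 : (0:ℝ) ≤ ((n:ℝ) - 2) * Q - S ^ 2 := by linarith
  -- each piece is zero
  have e1 : (X - Y) ^ 2 = 0 := by linarith
  have e3 : (Z2 - (X + Y)) ^ 2 = 0 := by linarith
  have e4 : (Z3 - (X + Y)) ^ 2 = 0 := by linarith
  have e5 : (Z4 - (X + Y)) ^ 2 = 0 := by linarith
  have eR : R = 0 := by linarith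
  have eD : ((n:ℝ) - 2) * Q - S ^ 2 = 0 := by linarith
  have hXY : X = Y := by have := sq_eq_zero_iff.mp e1; linarith
  have hz2 : Z2 = X + Y := by have := sq_eq_zero_iff.mp e3; linarith
  have hz3 : Z3 = X + Y := by have := sq_eq_zero_iff.mp e4; linarith
  have hz4 : Z4 = X + Y := by have := sq_eq_zero_iff.mp e5; linarith
  -- R = 0 gives v i = 0 for i ≥ 5
  have hvz : ∀ i : Fin n, 5 ≤ (i:ℕ) → v i = 0 := by
    intro i hi
    have hterm := (Finset.sum_eq_zero_iff_of_nonneg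
      (fun i _ => by unfold rI; split_ifs <;> [positivity; simp] :
        ∀ i ∈ Finset.univ, (0:ℝ) ≤ rI i * v i ^ 2)).mp eR i (Finset.mem_univ i)
    rw [show rI i = 1 from if_pos hi, one_mul] at hterm
    exact (pow_eq_zero_iff two_ne_zero).mp hterm
  have hU0 : U = 0 := Finset.sum_eq_zero fun i _ => by
    by_cases hi : 5 ≤ (i:ℕ)
    · rw [hvz i hi, mul_zero]
    · rw [show rI i = 0 from if_neg hi, zero_mul]
  -- now S = 6X, Q = 12 X², D = 12(n-5)X² = 0 forces X = 0
  have hX0 : X = 0 := by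
    have hQv : Q = 12 * X ^ 2 := by rw [hQd, eR, hz2, hz3, hz4, ← hXY]; ring
    have hSv : S = 6 * X := by rw [hSd, hU0, hz2, hz3, hz4, ← hXY]; ring
    rw [hQv, hSv] at eD
    have hr : ((n:ℝ) - 2) * (12 * X ^ 2) - (6 * X) ^ 2
        = 12 * (((n:ℝ) - 7) * X ^ 2) + 24 * X ^ 2 := by ring
    have h2 : 12 * (((n:ℝ) - 7) * X ^ 2) + 24 * X ^ 2 = 0 := by rw [← hr]; exact eD
    have h3 : 0 ≤ ((n:ℝ) - 7) * X ^ 2 := mul_nonneg (by linarith) (sq_nonneg X)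
    have hx2 : X ^ 2 = 0 := by linarith [sq_nonneg X]
    exact (pow_eq_zero_iff two_ne_zero).mp hx2
  have hY0 : Y = 0 := by rw [← hXY, hX0]
  apply hv
  funext i
  by_cases h0 : (i:ℕ) = 0
  · rw [show i = (⟨0, by omega⟩ : Fin n) from Fin.ext h0]; exact hX0
  · by_cases h1 : (i:ℕ) = 1
    · rw [show i = (⟨1, by omega⟩ : Fin n) from Fin.ext h1]; exact hY0
    · by_cases h2 : (i:ℕ) = 2
      · rw [show i = (⟨2, by omega⟩ : Fin n) from Fin.ext h2]
        show Z2 = 0; rw [hz2, hX0, hY0]; ring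
      · by_cases h3 : (i:ℕ) = 3
        · rw [show i = (⟨3, by omega⟩ : Fin n) from Fin.ext h3]
          show Z3 = 0; rw [hz3, hX0, hY0]; ring
        · by_cases h4 : (i:ℕ) = 4
          · rw [show i = (⟨4, by omega⟩ : Fin n) from Fin.ext h4]
            show Z4 = 0; rw [hz4, hX0, hY0]; ring
          · exact hvz i (by omega)
lemma eig_lt {n : ℕ} (hn : 7 ≤ n) {μ : ℝ}
    (hμ : ∃ v : Fin n → ℝ, v ≠ 0 ∧ (AU n).mulVec v = μ • v) : μ < (n:ℝ) - 2 := by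
  obtain ⟨v, hv0, hE⟩ := hμ
  have hq := key_ineq hn v hv0
  have hdot : v ⬝ᵥ (AU n).mulVec v = μ * (v ⬝ᵥ v) := by
    rw [hE, dotProduct_smul, smul_eq_mul]
  have hnn : 0 ≤ v ⬝ᵥ v := Finset.sum_nonneg fun i _ => mul_self_nonneg (v i)
  have hpos : 0 < v ⬝ᵥ v :=
    lt_of_le_of_ne hnn (fun h => hv0 (dotProduct_self_eq_zero.mp h.symm))
  rw [hdot] at hq
  exact lt_of_mul_lt_mul_right hq hpos.le

lemma eig_finite (n : ℕ) :
    {μ : ℝ | ∃ v : Fin n → ℝ, v ≠ 0 ∧ (AU n).mulVec v = μ • v}.Finite := by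
  apply Set.Finite.subset (Polynomial.finite_setOf_isRoot ((AU n).charpoly_monic.ne_zero))
  rintro μ ⟨v, hv0, hE⟩
  have hM : ((Matrix.diagonal fun _ : Fin n => μ) - AU n).mulVec v = 0 := by
    rw [Matrix.sub_mulVec, hE]
    funext i
    simp [Matrix.mulVec_diagonal]
  have hdet : ((Matrix.diagonal fun _ : Fin n => μ) - AU n).det = 0 :=
    Matrix.exists_mulVec_eq_zero_iff.mp ⟨v, hv0, hM⟩
  have hmap : (Matrix.charmatrix (AU n)).map (Polynomial.eval μ)
      = (Matrix.diagonal fun _ : Fin n => μ) - AU n := by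
    ext i j
    by_cases hij : i = j
    · subst hij
      simp [Matrix.charmatrix_apply_eq, Matrix.diagonal]
    · simp [Matrix.charmatrix_apply_ne _ _ _ hij, Matrix.diagonal, hij]
  show (AU n).charpoly.IsRoot μ
  have h := RingHom.map_det (Polynomial.evalRingHom μ) (Matrix.charmatrix (AU n))
  show (AU n).charpoly.eval μ = 0
  rw [Matrix.charpoly]
  calc Polynomial.eval μ (Matrix.charmatrix (AU n)).det
      = ((Polynomial.evalRingHom μ).mapMatrix (Matrix.charmatrix (AU n))).det := h
    _ = ((Matrix.charmatrix (AU n)).map (Polynomial.eval μ)).det := by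
        rw [RingHom.mapMatrix_apply]; rfl
    _ = 0 := by rw [hmap, hdet]

theorem lam1_AU_lt (n : ℕ) (hn : 7 ≤ n) : lam1 (AU n) < (n : ℝ) - 2 := by
  have h2 : (0:ℝ) < (n:ℝ) - 2 := by
    have : (7:ℝ) ≤ (n:ℝ) := by exact_mod_cast hn
    linarith
  rcases Set.eq_empty_or_nonempty
    {μ : ℝ | ∃ v : Fin n → ℝ, v ≠ 0 ∧ (AU n).mulVec v = μ • v} with h | h
  · rw [lam1, h, Real.sSup_empty]
    exact h2
  · rw [lam1]
    exact eig_lt hn (h.csSup_mem (eig_finite n))
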